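/- Linear interpolation error at an upwind point gains a factor of Δt: for a C² function ζ on [0,a] with uniform grid of size h, linear interpolant Π_h^{(1)}, and upwind point y = x_i − Δt·u with |u| ≤ U^∞ and y ∈ [0,a], one has |(Π_h^{(1)}ζ)(y) − ζ(y)| ≤ C·U^∞·Δt·h·‖ζ‖_{C²}, where C is independent of h, Δt, and u. Consequently (1/Δt)|(Π_h^{(1)}ζ)(y) − ζ(y)| = O(h). -/

import Mathlib

noncomputable def linInterp (h : ℝ) (ζ : ℝ → ℝ) (y : ℝ) : ℝ :=
  let i0 : ℤ := ⌊y / h⌋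
  ζ ((i0 : ℝ) * h) * ((((i0 : ℝ) + 1) * h - y) / h)
    + ζ (((i0 : ℝ) + 1) * h) * ((y - (i0 : ℝ) * h) / h)

lemma deriv_lip (ζ : ℝ → ℝ) (M : ℝ) (hζ : ContDiff ℝ 2 ζ)
    (hM : ∀ s : ℝ, |deriv (deriv ζ) s| ≤ M) (s t : ℝ) :
    |deriv ζ s - deriv ζ t| ≤ M * |s - t| := by
  have h2 : ContDiff ℝ (1+1) ζ := by norm_num; exact hζ
  have hd : Differentiable ℝ (deriv ζ) :=
    ((contDiff_succ_iff_deriv.mp h2).2.2).differentiable (by norm_num)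
  have := Convex.norm_image_sub_le_of_norm_deriv_le
    (f := deriv ζ) (C := M) (s := Set.univ)
    (fun x _ => hd x)
    (fun x _ => by simpa using hM x) convex_univ (Set.mem_univ t) (Set.mem_univ s)
  simpa [Real.norm_eq_abs, derivWithin_univ] using this

lemma taylor1 (ζ : ℝ → ℝ) (M : ℝ) (hζ : ContDiff ℝ 2 ζ)
    (hM : ∀ s : ℝ, |deriv (deriv ζ) s| ≤ M) (c b : ℝ) :
    |ζ b - ζ c - deriv ζ c * (b - c)| ≤ M * (b - c) ^ 2 := by
  have hMnn : 0 ≤ M := le_trans (abs_nonneg _) (hM 0)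
  have hdζ : Differentiable ℝ ζ := hζ.differentiable (by norm_num)
  set g : ℝ → ℝ := fun x => ζ x - deriv ζ c * x with hg
  have hder : ∀ x ∈ Set.uIcc c b,
      HasDerivWithinAt g (deriv ζ x - deriv ζ c) (Set.uIcc c b) x := by
    intro x _
    have h1 : HasDerivAt g (deriv ζ x - deriv ζ c * 1) x :=
      (hdζ x).hasDerivAt.sub ((hasDerivAt_id x).const_mul (deriv ζ c))
    simpa using h1.hasDerivWithinAt
  have hbd : ∀ x ∈ Set.uIcc c b, ‖deriv ζ x - deriv ζ c‖ ≤ M * |b - c| := by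
    intro x hx
    have h1 : |deriv ζ x - deriv ζ c| ≤ M * |x - c| := deriv_lip ζ M hζ hM x c
    have h2 : |x - c| ≤ |b - c| := by
      rcases Set.mem_uIcc.mp hx with ⟨h3, h4⟩ | ⟨h3, h4⟩
      · rw [abs_of_nonneg (by linarith : (0:ℝ) ≤ x - c), abs_of_nonneg (by linarith : (0:ℝ) ≤ b - c)]
        linarith
      · rw [abs_of_nonpos (by linarith : x - c ≤ 0), abs_of_nonpos (by linarith : b - c ≤ 0)]
        linarith
    calc |deriv ζ x - deriv ζ c| ≤ M * |x - c| := h1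
      _ ≤ M * |b - c| := by apply mul_le_mul_of_nonneg_left h2 hMnn
  have := Convex.norm_image_sub_le_of_norm_hasDerivWithin_le hder hbd
    (convex_uIcc c b) Set.left_mem_uIcc Set.right_mem_uIcc
  have heq : g b - g c = ζ b - ζ c - deriv ζ c * (b - c) := by simp [hg]; ring
  calc |ζ b - ζ c - deriv ζ c * (b - c)| = ‖g b - g c‖ := by rw [heq]; rfl
    _ ≤ M * |b - c| * ‖b - c‖ := this
    _ = M * (b - c) ^ 2 := by
        rw [Real.norm_eq_abs, mul_assoc, ← abs_mul, ← sq, abs_of_nonneg (sq_nonneg _)]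

theorem linear_interp_upwind_gain :
    ∃ C > (0 : ℝ), ∀ (a h Δt u Uinf M : ℝ) (i : ℤ) (ζ : ℝ → ℝ),
      0 < h → 0 < Δt → |u| ≤ Uinf →
      ContDiff ℝ 2 ζ →
      (∀ s : ℝ, |ζ s| ≤ M ∧ |deriv ζ s| ≤ M ∧ |deriv (deriv ζ) s| ≤ M) →
      (i : ℝ) * h ∈ Set.Icc (0 : ℝ) a →
      (i : ℝ) * h - Δt * u ∈ Set.Icc (0 : ℝ) a →
      |linInterp h ζ ((i : ℝ) * h - Δt * u) - ζ ((i : ℝ) * h - Δt * u)|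
          ≤ C * Uinf * Δt * h * M ∧
      (1 / Δt) * |linInterp h ζ ((i : ℝ) * h - Δt * u) - ζ ((i : ℝ) * h - Δt * u)|
          ≤ C * Uinf * h * M := by
  refine ⟨1, one_pos, ?_⟩
  intro a h Δt u Uinf M i ζ hh hΔt hu hζ hM _ _
  have hMnn : 0 ≤ M := le_trans (abs_nonneg _) (hM 0).1
  have hUnn : 0 ≤ Uinf := le_trans (abs_nonneg u) hu
  have hne : h ≠ 0 := ne_of_gt hh
  set y : ℝ := (i:ℝ)*h - Δt*u with hydef
  set i0 : ℤ := ⌊y / h⌋ with hi0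
  have hdL : 0 ≤ y - (i0:ℝ)*h := by
    have h1 : (i0:ℝ) ≤ y / h := Int.floor_le _
    have h2 : (i0:ℝ) * h ≤ y := (le_div_iff₀ hh).mp h1
    linarith
  have hdR : 0 ≤ ((i0:ℝ)+1)*h - y := by
    have h1 : y / h < (i0:ℝ) + 1 := Int.lt_floor_add_one _
    have h2 : y < ((i0:ℝ)+1) * h := (div_lt_iff₀ hh).mp h1
    linarith
  have key : linInterp h ζ y - ζ y
      = ((((i0:ℝ)+1)*h - y)/h) * (ζ ((i0:ℝ)*h) - ζ y - deriv ζ y * ((i0:ℝ)*h - y))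
        + ((y - (i0:ℝ)*h)/h) * (ζ (((i0:ℝ)+1)*h) - ζ y - deriv ζ y * (((i0:ℝ)+1)*h - y)) := by
    simp only [linInterp, ← hi0]
    field_simp
    ring
  have tL := taylor1 ζ M hζ (fun s => (hM s).2.2) y ((i0:ℝ)*h)
  have tR := taylor1 ζ M hζ (fun s => (hM s).2.2) y (((i0:ℝ)+1)*h)
  have hα : 0 ≤ (((i0:ℝ)+1)*h - y)/h := div_nonneg hdR hh.le
  have hβ : 0 ≤ (y - (i0:ℝ)*h)/h := div_nonneg hdL hh.le
  have habs : |linInterp h ζ y - ζ y| ≤ M * (((i0:ℝ)+1)*h - y) * (y - (i0:ℝ)*h) := by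
    rw [key]
    calc |((((i0:ℝ)+1)*h - y)/h) * (ζ ((i0:ℝ)*h) - ζ y - deriv ζ y * ((i0:ℝ)*h - y))
          + ((y - (i0:ℝ)*h)/h) * (ζ (((i0:ℝ)+1)*h) - ζ y - deriv ζ y * (((i0:ℝ)+1)*h - y))|
        ≤ ((((i0:ℝ)+1)*h - y)/h) * |ζ ((i0:ℝ)*h) - ζ y - deriv ζ y * ((i0:ℝ)*h - y)|
          + ((y - (i0:ℝ)*h)/h) * |ζ (((i0:ℝ)+1)*h) - ζ y - deriv ζ y * (((i0:ℝ)+1)*h - y)| := by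
          refine (abs_add_le _ _).trans ?_
          rw [abs_mul, abs_mul, abs_of_nonneg hα, abs_of_nonneg hβ]
      _ ≤ ((((i0:ℝ)+1)*h - y)/h) * (M * ((i0:ℝ)*h - y)^2)
          + ((y - (i0:ℝ)*h)/h) * (M * ((((i0:ℝ)+1)*h - y))^2) :=
          add_le_add (mul_le_mul_of_nonneg_left tL hα) (mul_le_mul_of_nonneg_left tR hβ)
      _ = M * (((i0:ℝ)+1)*h - y) * (y - (i0:ℝ)*h) := by field_simp; ring
  have hbound : M * (((i0:ℝ)+1)*h - y) * (y - (i0:ℝ)*h) ≤ Uinf * Δt * h * M := by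
    rcases le_or_gt i i0 with hii | hii
    · have h1 : (i:ℝ) * h ≤ (i0:ℝ) * h :=
        mul_le_mul_of_nonneg_right (by exact_mod_cast hii) hh.le
      have h2 : y - (i0:ℝ)*h ≤ Δt * Uinf := by
        have h3 : y - (i:ℝ)*h = Δt * (-u) := by rw [hydef]; ring
        have h4 : -u ≤ Uinf := le_trans (neg_le_abs u) hu
        nlinarith
      have h5 : ((i0:ℝ)+1)*h - y ≤ h := by linarith
      have h6 : (((i0:ℝ)+1)*h - y) * (y - (i0:ℝ)*h) ≤ h * (Δt * Uinf) :=
        mul_le_mul h5 h2 hdL hh.le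
      calc M * (((i0:ℝ)+1)*h - y) * (y - (i0:ℝ)*h)
          = M * ((((i0:ℝ)+1)*h - y) * (y - (i0:ℝ)*h)) := by ring
        _ ≤ M * (h * (Δt * Uinf)) := mul_le_mul_of_nonneg_left h6 hMnn
        _ = Uinf * Δt * h * M := by ring
    · have h1 : ((i0:ℝ)+1) * h ≤ (i:ℝ) * h := by
        have : (i0:ℝ) + 1 ≤ (i:ℝ) := by exact_mod_cast hii
        exact mul_le_mul_of_nonneg_right this hh.le
      have h2 : ((i0:ℝ)+1)*h - y ≤ Δt * Uinf := by
        have h3 : (i:ℝ)*h - y = Δt * u := by rw [hydef]; ring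
        have h4 : u ≤ Uinf := le_trans (le_abs_self u) hu
        nlinarith
      have h5 : y - (i0:ℝ)*h ≤ h := by linarith
      have h6 : (((i0:ℝ)+1)*h - y) * (y - (i0:ℝ)*h) ≤ (Δt * Uinf) * h :=
        mul_le_mul h2 h5 hdL (mul_nonneg hΔt.le hUnn)
      calc M * (((i0:ℝ)+1)*h - y) * (y - (i0:ℝ)*h)
          = M * ((((i0:ℝ)+1)*h - y) * (y - (i0:ℝ)*h)) := by ring
        _ ≤ M * ((Δt * Uinf) * h) := mul_le_mul_of_nonneg_left h6 hMnn
        _ = Uinf * Δt * h * M := by ring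
  have main1 : |linInterp h ζ y - ζ y| ≤ 1 * Uinf * Δt * h * M := by
    calc |linInterp h ζ y - ζ y| ≤ M * (((i0:ℝ)+1)*h - y) * (y - (i0:ℝ)*h) := habs
      _ ≤ Uinf * Δt * h * M := hbound
      _ = 1 * Uinf * Δt * h * M := by ring
  refine ⟨main1, ?_⟩
  calc (1/Δt) * |linInterp h ζ y - ζ y| ≤ (1/Δt) * (1 * Uinf * Δt * h * M) :=
        mul_le_mul_of_nonneg_left main1 (by positivity)
    _ = 1 * Uinf * h * M := by field_simp
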